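/- Let T be a consistent complete theory, M a model of T with an interpreted arithmetic with standard part ω, and ρ(x) := ∃y (Prf_A(y,x) ∧ ∀z<y ¬Prf_A(z,¬x)) where Prf_A correctly represents, for standard arguments, proofs from an axiom set A that axiomatizes T. If ψ is an L-sentence with M ⊨ ψ, then M ⊨ ρ(⌜ψ⌝). -/

import Mathlib

/- Rosser provability, truth-to-provability direction:
Let T be a consistent complete theory, M ⊨ T with an interpreted arithmetic whose
standard numerals are downward closed, and let
ρ(x) := ∃y (Prf_A(y,x) ∧ ∀z<y ¬Prf_A(z,¬x)), where Prf_A correctly represents, for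
standard arguments, proofs from an axiom set A axiomatizing T.
If ψ is a sentence with M ⊨ ψ, then M ⊨ ρ(⌜ψ⌝). -/

open FirstOrder Language

namespace RosserTruth

variable {L : Language}

/-- The Rosser sentence `∃y (Prf(y,c) ∧ ∀z (z < y → ¬ Prf(z,cneg)))`, where `Prf` and
`lt` are two-variable formulas and `c`, `cneg` are the Gödel numerals of a sentence and
of its negation. -/
noncomputable def rosser (Prf lt : L.Formula (Fin 2)) (c cneg : L.Term Empty) :
    L.Sentence :=
  ∃' (((Prf.subst ![Term.var 0, c.relabel (fun x => x.elim)]).relabel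
          (fun _ => Sum.inr (0 : Fin 1)) : L.BoundedFormula Empty 1) ⊓
      ∀' ((( (lt.subst ![Term.var 1, Term.var 0]) ⟹
            ∼(Prf.subst ![Term.var 1, cneg.relabel (fun x => x.elim)])).relabel
          (fun i => Sum.inr i) : L.BoundedFormula Empty 2)))

lemma term_realize_empty {M : Type*} [L.Structure M] (t : L.Term Empty)
    (v w : Empty → M) : t.realize v = t.realize w := by
  have h : v = w := funext fun x => x.elim
  rw [h]

theorem truth_implies_rosser_provability
    (T : L.Theory) (hconsis : T.IsSatisfiable) (hcomp : T.IsComplete)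
    (M : Type*) [L.Structure M] [Nonempty M] (hM : M ⊨ T)
    -- A axiomatizes T
    (A : L.Theory) (hA : ∀ φ : L.Sentence, A ⊨ᵇ φ ↔ T ⊨ᵇ φ)
    -- Gödel numbering of sentences, and numerals
    (codeS : L.Sentence → ℕ) (num : ℕ → L.Term Empty)
    -- the formulas Prf_A(y,x) and y < z of the interpreted arithmetic of M
    (Prf lt : L.Formula (Fin 2))
    -- `pf n φ` : the natural number n codes a genuine first-order proof of φ from A
    (pf : ℕ → L.Sentence → Prop)
    -- the coded proof relation is sound and complete for provability from A
    (hsound : ∀ (n : ℕ) (φ : L.Sentence), pf n φ → A ⊨ᵇ φ)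
    (hcompl : ∀ φ : L.Sentence, A ⊨ᵇ φ → ∃ n : ℕ, pf n φ)
    -- Prf_A correctly represents the proof relation on standard arguments
    (hPrf : ∀ (n : ℕ) (φ : L.Sentence),
      Prf.Realize (M := M)
        ![(num n).realize (fun x => x.elim), (num (codeS φ)).realize (fun x => x.elim)]
        ↔ pf n φ)
    -- standard numerals are downward closed in the interpreted arithmetic of M
    (hinit : ∀ (z : M) (n : ℕ),
      lt.Realize (M := M) ![z, (num n).realize (fun x => x.elim)] →
        ∃ k : ℕ, k < n ∧ z = (num k).realize (fun x => x.elim))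
    -- ψ is a sentence true in M
    (ψ : L.Sentence) (hψ : M ⊨ ψ) :
    M ⊨ rosser Prf lt (num (codeS ψ)) (num (codeS (∼ψ))) := by
  -- T proves ψ
  have hTψ : T ⊨ᵇ ψ := by
    rcases hcomp.2 ψ with h | h
    · exact h
    · exfalso
      haveI : T.Model M := hM
      exact (h.realize_sentence M) hψ
  obtain ⟨n, hn⟩ := hcompl ψ ((hA ψ).2 hTψ)
  have hnoneg : ∀ k : ℕ, ¬ pf k (∼ψ) := by
    intro k hk
    have hTn : T ⊨ᵇ (∼ψ) := (hA _).1 (hsound _ _ hk)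
    obtain ⟨N⟩ := hconsis
    have h1 := hTψ.realize_sentence N
    have h2 := hTn.realize_sentence N
    exact h2 h1
  rw [rosser]
  rw [Sentence.Realize, Formula.Realize, BoundedFormula.realize_ex]
  refine ⟨(num n).realize (fun x => x.elim), ?_⟩
  simp only [BoundedFormula.realize_inf, BoundedFormula.realize_all,
    BoundedFormula.realize_relabel, BoundedFormula.realize_subst,
    BoundedFormula.realize_imp, BoundedFormula.realize_not,
    Term.realize_relabel]
  constructor
  · have h := (hPrf n ψ).2 hn
    unfold Formula.Realize at h
    convert h using 2 with a
    · fin_cases a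
      · simp [Fin.snoc]
      · simp only [Fin.mk_one, Matrix.cons_val_one, Matrix.head_cons,
          Term.realize_relabel]
        simp only [Matrix.cons_val_zero, Term.realize_relabel]
        exact term_realize_empty (L := L) (M := M) _ _ _
  · intro z hlt hprf
    -- hlt : lt realized at (z, num n); hprf : Prf realized at (z, num (codeS ∼ψ))
    have hlt' : lt.Realize (M := M) ![z, (num n).realize (fun x => x.elim)] := by
      unfold Formula.Realize
      convert hlt using 2 with a
      fin_cases a <;> simp [Fin.snoc]
    obtain ⟨k, hk, rfl⟩ := hinit z n hlt'
    apply hnoneg k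
    apply (hPrf k (∼ψ)).1
    unfold Formula.Realize
    convert hprf using 2 with a
    fin_cases a
    · simp [Fin.snoc]
    · simp only [Fin.mk_one, Matrix.cons_val_one, Matrix.head_cons, Term.realize_relabel]
      simp only [Matrix.cons_val_zero, Term.realize_relabel]
      exact term_realize_empty (L := L) (M := M) _ _ _

end RosserTruth
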